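/- arXiv:1201.3503 — 2 statements merged into one kernel-verified Lean document; each statement's English description precedes it below -/
import Mathlib

section
/- Let X be a metric space with metric d_X, let A be a set with a probability measure μ, and let f, g: A → X be measurable maps such that d_B(δ_{f(x)}, δ_{g(x)}) < ε for every x ∈ A, where 0 < ε < 1 and d_B is the metric on measures built from a dense sequence {φ_k} ⊂ C_b(X) as d_B(μ₁,μ₂) = Σ_k 2^{−k}|⟨φ_k,μ₁−μ₂⟩|/(1+|⟨φ_k,μ₁−μ₂⟩|). Then d_B(f#μ, g#μ) ≤ C ε(|log ε| + 1) for a universal constant C. -/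
open MeasureTheory

noncomputable section

/-- The metric on finite Borel measures built from a fixed dense sequence
`φ : ℕ → C_b(X)`:
`d_B(P,Q) = ∑_k 2^{-k-1} |⟨φ_k, P−Q⟩|/(1 + |⟨φ_k, P−Q⟩|)`. -/
def dB {X : Type*} [TopologicalSpace X] [MeasurableSpace X]
    (φ : ℕ → BoundedContinuousFunction X ℝ) (P Q : Measure X) : ℝ :=
  ∑' k : ℕ, (2 : ℝ) ^ (-(k : ℤ) - 1) *
    (|(∫ x, φ k x ∂P) - ∫ x, φ k x ∂Q| /
      (1 + |(∫ x, φ k x ∂P) - ∫ x, φ k x ∂Q|))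

private lemma pow_repr (k : ℕ) : (2:ℝ)^(-(k:ℤ)-1) = (1/2:ℝ)^(k+1) := by
  rw [one_div, inv_pow, ← zpow_natCast, ← zpow_neg]
  congr 1; push_cast; ring

private lemma geom_sum' : ∑' k : ℕ, (2:ℝ)^(-(k:ℤ)-1) = 1 := by
  simp only [pow_repr, pow_succ]
  rw [tsum_mul_right, tsum_geometric_two]; norm_num

private lemma geom_summable : Summable (fun k : ℕ => (2:ℝ)^(-(k:ℤ)-1)) := by
  simp only [pow_repr]
  exact (summable_geometric_two).comp_injective (add_left_injective 1) |>.congr (fun k => rfl)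

private lemma h_le_one (x : ℝ) : |x|/(1+|x|) ≤ 1 := by
  rw [div_le_one (by positivity)]; linarith [abs_nonneg x]

private lemma h_le_self (x : ℝ) : |x|/(1+|x|) ≤ |x| := by
  apply div_le_self (abs_nonneg x); linarith [abs_nonneg x]

private lemma summable_terms (c : ℕ → ℝ) :
    Summable (fun k : ℕ => (2:ℝ)^(-(k:ℤ)-1) * (|c k|/(1+|c k|))) := by
  apply Summable.of_nonneg_of_le (fun k => by positivity) (fun k => ?_) geom_summable
  calc (2:ℝ)^(-(k:ℤ)-1) * (|c k|/(1+|c k|)) ≤ (2:ℝ)^(-(k:ℤ)-1) * 1 :=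
        mul_le_mul_of_nonneg_left (h_le_one _) (by positivity)
    _ = _ := mul_one _

private lemma aux1 (t c : ℝ) (ht : 0 ≤ t) (h : t/(1+t) ≤ c) (hc : c ≤ 1/2) : t ≤ 2*c := by
  have h1 : (0:ℝ) < 1 + t := by linarith
  have h2 := (div_le_iff₀ h1).mp h
  nlinarith

/-- There is a universal constant `C` such that if `f, g : A → X` satisfy
`d_B(δ_{f(x)}, δ_{g(x)}) < ε` pointwise for some `0 < ε < 1`, then the
push-forward measures satisfy `d_B(f#μ, g#μ) ≤ C ε(|log ε| + 1)`. -/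
theorem dB_pushforward_estimate :
    ∃ C : ℝ, 0 < C ∧
      ∀ (X : Type) [MetricSpace X] [MeasurableSpace X] [BorelSpace X]
        (φ : ℕ → BoundedContinuousFunction X ℝ)
        (A : Type) [MeasurableSpace A]
        (μ : Measure A) [IsProbabilityMeasure μ]
        (f g : A → X), Measurable f → Measurable g →
        ∀ ε : ℝ, 0 < ε → ε < 1 →
        (∀ a : A, dB φ (Measure.dirac (f a)) (Measure.dirac (g a)) < ε) →
        dB φ (μ.map f) (μ.map g) ≤ C * ε * (|Real.log ε| + 1) := by
  refine ⟨10, by norm_num, ?_⟩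
  intro X _ _ _ φ A _ μ _ f g hf hg ε hε hε1 hpt
  set L : ℝ := Real.logb 2 (1/ε) with hLdef
  have hε' : (0:ℝ) < 1/ε := by positivity
  have h1ε : (1:ℝ) ≤ 1/ε := by rw [le_div_iff₀ hε]; linarith
  have hL0 : 0 ≤ L := Real.logb_nonneg one_lt_two h1ε
  have h2L : (2:ℝ) ^ L = 1/ε := Real.rpow_logb two_pos (by norm_num) hε'
  set K : ℕ := ⌊L⌋₊ - 1 with hKdef
  have hKL : (K:ℝ) ≤ L := le_trans (Nat.cast_le.mpr (Nat.sub_le _ _)) (Nat.floor_le hL0)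
  have hLK : L - 2 ≤ (K:ℝ) := by
    have h1 : L < ⌊L⌋₊ + 1 := Nat.lt_floor_add_one L
    have h2 : ⌊L⌋₊ ≤ K + 1 := by omega
    have h2' : ((⌊L⌋₊:ℕ):ℝ) ≤ (K:ℝ) + 1 := by exact_mod_cast h2
    linarith
  -- pointwise bound per k
  have hpoint : ∀ (k : ℕ) (a : A),
      (2:ℝ)^(-(k:ℤ)-1) * (|φ k (f a) - φ k (g a)| / (1 + |φ k (f a) - φ k (g a)|)) < ε := by
    intro k a
    have hS := hpt a
    refine lt_of_le_of_lt ?_ hS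
    unfold dB
    simp only [integral_dirac]
    exact Summable.le_tsum (summable_terms (fun j => φ j (f a) - φ j (g a))) k
      (fun j _ => by positivity)
  -- key: for k < K, pointwise |φ k (f a) - φ k (g a)| ≤ 2^(k+2) * ε
  have hkey : ∀ k, k < K → ∀ a : A, |φ k (f a) - φ k (g a)| ≤ 2^(k+2) * ε := by
    intro k hk a
    have hck : ((k:ℝ)+2) ≤ L := by
      have : (k+2 : ℕ) ≤ ⌊L⌋₊ := by omega
      have h1 : ((k+2:ℕ):ℝ) ≤ (⌊L⌋₊:ℝ) := by exact_mod_cast this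
      have h2 := Nat.floor_le hL0
      push_cast at h1; linarith
    have hpow : (2:ℝ)^(k+2) * ε ≤ 1 := by
      have h1 : (2:ℝ)^(k+2) ≤ (2:ℝ)^L := by
        rw [← Real.rpow_natCast 2 (k+2)]
        apply Real.rpow_le_rpow_of_exponent_le one_le_two
        push_cast; linarith
      rw [h2L] at h1
      rw [← le_div_iff₀ hε]; linarith
    set t := |φ k (f a) - φ k (g a)| with htdef
    have hpt2 := hpoint k a
    rw [pow_repr] at hpt2
    have hApos : (0:ℝ) < (1/2:ℝ)^(k+1) := by positivity
    have hinv : ε / ((1/2:ℝ)^(k+1)) = ε * 2^(k+1) := by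
      rw [one_div, inv_pow, div_eq_mul_inv, inv_inv]
    have hh : t / (1+t) ≤ ε * 2^(k+1) := by
      rw [← hinv, le_div_iff₀ hApos]
      nlinarith [hpt2]
    have hc : ε * 2^(k+1) ≤ 1/2 := by
      have : (2:ℝ)^(k+2) = 2 * 2^(k+1) := by ring
      nlinarith
    have := aux1 t (ε * 2^(k+1)) (abs_nonneg _) hh hc
    have h4 : (2:ℝ)^(k+2) = 2 * 2^(k+1) := by ring
    rw [h4]
    linarith
  -- integrability
  have hint : ∀ (k : ℕ) (u : A → X), Measurable u → Integrable (fun a => φ k (u a)) μ := by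
    intro k u hu
    have := (φ k).integrable (μ.map u)
    rwa [integrable_map_measure (φ k).continuous.aestronglyMeasurable hu.aemeasurable] at this
  -- D k
  set D : ℕ → ℝ := fun k => (∫ x, φ k x ∂(μ.map f)) - ∫ x, φ k x ∂(μ.map g) with hDdef
  have hD : ∀ k, D k = ∫ a, (φ k (f a) - φ k (g a)) ∂μ := by
    intro k
    rw [hDdef]
    simp only
    rw [integral_map hf.aemeasurable (φ k).continuous.aestronglyMeasurable,
        integral_map hg.aemeasurable (φ k).continuous.aestronglyMeasurable,
        ← integral_sub (hint k f hf) (hint k g hg)]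
  have hDbound : ∀ k, k < K → |D k| ≤ 2^(k+2) * ε := by
    intro k hk
    rw [hD k]
    have := norm_integral_le_of_norm_le_const (μ := μ)
      (f := fun a => φ k (f a) - φ k (g a)) (C := 2^(k+2) * ε)
      (Filter.Eventually.of_forall (fun a => by
        rw [Real.norm_eq_abs]; exact hkey k hk a))
    simpa using this
  -- sum manipulation
  set F : ℕ → ℝ := fun k => (2:ℝ)^(-(k:ℤ)-1) * (|D k|/(1+|D k|)) with hFdef
  have hsumF : Summable F := summable_terms D
  have hdB : dB φ (μ.map f) (μ.map g) = ∑' k, F k := rfl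
  rw [hdB, ← Summable.sum_add_tsum_nat_add K hsumF]
  -- head bound
  have hhead : ∑ i ∈ Finset.range K, F i ≤ K * (2*ε) := by
    have : ∀ i ∈ Finset.range K, F i ≤ 2*ε := by
      intro i hi
      rw [Finset.mem_range] at hi
      have h1 : F i ≤ (1/2:ℝ)^(i+1) * |D i| := by
        rw [hFdef]; simp only; rw [pow_repr]
        exact mul_le_mul_of_nonneg_left (h_le_self _) (by positivity)
      have h2 : |D i| ≤ 2^(i+2) * ε := hDbound i hi
      have h3 : ((1/2:ℝ))^(i+1) * (2:ℝ)^(i+1) = 1 := by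
        rw [← mul_pow]; norm_num
      have h4 : (2:ℝ)^(i+2) = 2^(i+1) * 2 := by ring
      have h5 : (0:ℝ) ≤ (1/2:ℝ)^(i+1) := by positivity
      calc F i ≤ (1/2:ℝ)^(i+1) * |D i| := h1
        _ ≤ (1/2:ℝ)^(i+1) * (2^(i+2) * ε) :=
            mul_le_mul_of_nonneg_left h2 h5
        _ = 2*ε := by rw [h4]; nlinarith [h3]
    calc ∑ i ∈ Finset.range K, F i ≤ ∑ i ∈ Finset.range K, (2*ε) :=
          Finset.sum_le_sum this
      _ = K * (2*ε) := by rw [Finset.sum_const, Finset.card_range, nsmul_eq_mul]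
  -- tail bound
  have htail : ∑' i, F (i + K) ≤ (1/2:ℝ)^K := by
    have hb : ∀ i : ℕ, F (i + K) ≤ (1/2:ℝ)^K * (2:ℝ)^(-(i:ℤ)-1) := by
      intro i
      have h1 : F (i+K) ≤ (2:ℝ)^(-((i+K:ℕ):ℤ)-1) * 1 :=
        mul_le_mul_of_nonneg_left (h_le_one _) (by positivity)
      rw [mul_one] at h1
      have h2 : (2:ℝ)^(-((i+K:ℕ):ℤ)-1) = (1/2:ℝ)^K * (2:ℝ)^(-(i:ℤ)-1) := by
        rw [pow_repr, pow_repr, ← pow_add]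
        congr 1; omega
      linarith [h1, h2 ▸ h1]
    have hs1 : Summable (fun i => F (i + K)) := (summable_nat_add_iff K).mpr hsumF
    have hs2 : Summable (fun i : ℕ => (1/2:ℝ)^K * (2:ℝ)^(-(i:ℤ)-1)) :=
      geom_summable.mul_left _
    calc ∑' i, F (i + K) ≤ ∑' i : ℕ, (1/2:ℝ)^K * (2:ℝ)^(-(i:ℤ)-1) :=
          Summable.tsum_le_tsum hb hs1 hs2
      _ = (1/2:ℝ)^K * ∑' i : ℕ, (2:ℝ)^(-(i:ℤ)-1) := tsum_mul_left
      _ = (1/2:ℝ)^K := by rw [geom_sum', mul_one]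
  -- final numerics
  have hpowK : (1/2:ℝ)^K ≤ 4*ε := by
    have e1 : ((1:ℝ)/2)^K = (2:ℝ)^(-(K:ℝ)) := by
      rw [one_div, inv_pow, ← Real.rpow_natCast 2 K, ← Real.rpow_neg (by norm_num)]
    have e2 : (2:ℝ)^(-(K:ℝ)) ≤ (2:ℝ)^(2-L) :=
      Real.rpow_le_rpow_of_exponent_le one_le_two (by linarith)
    have e3 : (2:ℝ)^(2-L:ℝ) = 4*ε := by
      rw [Real.rpow_sub two_pos, h2L]
      have h4 : (2:ℝ)^(2:ℝ) = 4 := by norm_num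
      rw [h4]
      field_simp
    rw [e1]
    linarith [e2, e3 ▸ e2]
  have hlog : L ≤ 2 * |Real.log ε| := by
    have hln : Real.log ε < 0 := Real.log_neg hε hε1
    have habs : |Real.log ε| = -Real.log ε := abs_of_neg hln
    have hL2 : L = -Real.log ε / Real.log 2 := by
      rw [hLdef, Real.logb, one_div, Real.log_inv]
    have hlog2 : (0.6931471803:ℝ) < Real.log 2 := Real.log_two_gt_d9
    rw [hL2, habs]
    rw [div_le_iff₀ (by linarith)]
    nlinarith [hln]
  have habs0 : 0 ≤ |Real.log ε| := abs_nonneg _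
  nlinarith [hhead, htail, hpowK, hKL, hlog, hε, habs0]

end
end

section
/- Let G ⊂ R^d be compact with |G| > 0 and lim_{ε→0} |(G + εx) △ G|/|G| = 0 for all x. Let X be Polish with a continuous d-parameter translation action θ, and let P be the weak limit of the probability measures P_ε = image of the normalized Lebesgue measure on G under x ↦ (x, θ_{x/ε} u_ε) for some family u_ε ∈ X, assuming the P_ε are tight. Then for any C¹ map λ: G → R^d, P is invariant under the map (x,u) ↦ (x, θ_{λ(x)} u). -/
open MeasureTheory Filter Topology Set BoundedContinuousFunction NNReal

section OpenApprox

variable {α : Type*} [MetricSpace α]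

/-- Bounded continuous approximations (from below, pointwise) to the indicator of an open set. -/
noncomputable def oA (U : Set α) (n : ℕ) : BoundedContinuousFunction α ℝ :=
  BoundedContinuousFunction.ofNormedAddCommGroup
    (fun x => 1 - (thickenedIndicator (δ := ((n : ℝ) + 1)⁻¹) (by positivity) Uᶜ x : ℝ))
    (continuous_const.sub (NNReal.continuous_coe.comp
      (thickenedIndicator (δ := ((n : ℝ) + 1)⁻¹) (by positivity) Uᶜ).continuous))
    1
    (by
      intro x
      have h1 : (thickenedIndicator (δ := ((n : ℝ) + 1)⁻¹) (by positivity) Uᶜ x : ℝ) ≤ 1 := by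
        exact_mod_cast thickenedIndicator_le_one _ _ x
      have h0 : (0 : ℝ) ≤ (thickenedIndicator (δ := ((n : ℝ) + 1)⁻¹) (by positivity) Uᶜ x : ℝ) :=
        (thickenedIndicator _ Uᶜ x).coe_nonneg
      rw [Real.norm_eq_abs, abs_le]
      constructor <;> linarith)

lemma oA_nonneg (U : Set α) (n : ℕ) (x : α) : 0 ≤ oA U n x := by
  have h1 : (thickenedIndicator (δ := ((n : ℝ) + 1)⁻¹) (by positivity) Uᶜ x : ℝ) ≤ 1 := by
    exact_mod_cast thickenedIndicator_le_one _ _ x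
  simp only [oA, BoundedContinuousFunction.coe_ofNormedAddCommGroup]
  linarith

lemma oA_le_one (U : Set α) (n : ℕ) (x : α) : oA U n x ≤ 1 := by
  have h0 : (0 : ℝ) ≤ (thickenedIndicator (δ := ((n : ℝ) + 1)⁻¹) (by positivity) Uᶜ x : ℝ) :=
    (thickenedIndicator _ Uᶜ x).coe_nonneg
  simp only [oA, BoundedContinuousFunction.coe_ofNormedAddCommGroup]
  linarith

lemma oA_tendsto {U : Set α} (hU : IsOpen U) (x : α) :
    Tendsto (fun n => oA U n x) atTop (𝓝 (U.indicator (fun _ => (1 : ℝ)) x)) := by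
  have hpos : ∀ n : ℕ, (0 : ℝ) < ((n : ℝ) + 1)⁻¹ := fun n => by positivity
  have hlim : Tendsto (fun n : ℕ => ((n : ℝ) + 1)⁻¹) atTop (𝓝 0) := by
    simpa using tendsto_one_div_add_atTop_nhds_zero_nat (𝕜 := ℝ)
  have key := thickenedIndicator_tendsto_indicator_closure hpos hlim Uᶜ
  rw [tendsto_pi_nhds] at key
  have keyx := key x
  have hclos : closure Uᶜ = Uᶜ := (hU.isClosed_compl).closure_eq
  rw [hclos] at keyx
  have keyx' : Tendsto (fun n : ℕ =>
      ((thickenedIndicator (hpos n) Uᶜ x : ℝ≥0) : ℝ)) atTop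
      (𝓝 ((Uᶜ.indicator (fun _ => (1 : ℝ≥0)) x : ℝ≥0) : ℝ)) :=
    (NNReal.continuous_coe.tendsto _).comp keyx
  have : Tendsto (fun n : ℕ => oA U n x) atTop
      (𝓝 (1 - ((Uᶜ.indicator (fun _ => (1 : ℝ≥0)) x : ℝ≥0) : ℝ))) := by
    simpa only [oA, BoundedContinuousFunction.coe_ofNormedAddCommGroup] using
      (tendsto_const_nhds.sub keyx')
  convert this using 2
  by_cases hx : x ∈ U
  · simp [hx]
  · simp [hx]

end OpenApprox

section ExtProd

/-- Two finite measures on a product of separable metric spaces are equal if integrals of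
all products of bounded continuous functions agree. -/
lemma ext_of_prod_integral {β : Type*} [MetricSpace β] [MeasurableSpace β] [BorelSpace β]
    [SecondCountableTopology β]
    {γ : Type*} [MetricSpace γ] [MeasurableSpace γ] [BorelSpace γ] [SecondCountableTopology γ]
    (μ ν : Measure (β × γ)) [IsFiniteMeasure μ] [IsFiniteMeasure ν]
    (hint : ∀ (g : BoundedContinuousFunction β ℝ) (h : BoundedContinuousFunction γ ℝ),
      ∫ p, g p.1 * h p.2 ∂μ = ∫ p, g p.1 * h p.2 ∂ν) : μ = ν := by
  have hCgen : MeasurableSpace.generateFrom {s : Set β | IsOpen s} = ‹MeasurableSpace β› := by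
    rw [BorelSpace.measurable_eq (α := β)]; rfl
  have hDgen : MeasurableSpace.generateFrom {s : Set γ | IsOpen s} = ‹MeasurableSpace γ› := by
    rw [BorelSpace.measurable_eq (α := γ)]; rfl
  have hCspan : IsCountablySpanning {s : Set β | IsOpen s} :=
    ⟨fun _ => univ, fun _ => isOpen_univ, by simp [Set.iUnion_const]⟩
  have hDspan : IsCountablySpanning {s : Set γ | IsOpen s} :=
    ⟨fun _ => univ, fun _ => isOpen_univ, by simp [Set.iUnion_const]⟩
  have hgen := generateFrom_eq_prod hCgen hDgen hCspan hDspan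
  have hpi : IsPiSystem (Set.image2 (· ×ˢ ·) {s : Set β | IsOpen s} {t : Set γ | IsOpen t}) := by
    apply IsPiSystem.prod <;>
      exact fun s hs t ht _ => hs.inter ht
  -- integrals of (oA U n) ⊗ (oA V m) converge to measures of rectangles
  have main : ∀ (ρ : Measure (β × γ)) [IsFiniteMeasure ρ] (U : Set β) (V : Set γ),
      IsOpen U → IsOpen V →
      ∀ n : ℕ, Tendsto (fun m => ∫ p, oA U n p.1 * oA V m p.2 ∂ρ) atTop
        (𝓝 (∫ p, oA U n p.1 * V.indicator (fun _ => (1:ℝ)) p.2 ∂ρ)) := by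
    intro ρ _ U V hU hV n
    apply tendsto_integral_of_dominated_convergence (fun _ => (1 : ℝ))
    · intro m
      exact (((oA U n).continuous.comp continuous_fst).mul
        ((oA V m).continuous.comp continuous_snd)).aestronglyMeasurable
    · exact integrable_const 1
    · intro m
      filter_upwards with p
      rw [Real.norm_eq_abs, abs_mul]
      have := oA_nonneg U n p.1
      have := oA_le_one U n p.1
      have := oA_nonneg V m p.2
      have := oA_le_one V m p.2
      calc |oA U n p.1| * |oA V m p.2| ≤ 1 * 1 := by
            apply mul_le_mul <;> first | rw [abs_of_nonneg] <;> assumption | positivity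
        _ = 1 := by ring
    · filter_upwards with p
      exact tendsto_const_nhds.mul (oA_tendsto hV p.2)
  have indprod : ∀ (U : Set β) (V : Set γ) (p : β × γ),
      U.indicator (fun _ => (1:ℝ)) p.1 * V.indicator (fun _ => (1:ℝ)) p.2
        = (U ×ˢ V).indicator (fun _ => (1:ℝ)) p := by
    intro U V p
    by_cases h1 : p.1 ∈ U <;> by_cases h2 : p.2 ∈ V <;>
      simp [h1, h2, Set.indicator_apply, Set.mem_prod]
  have main2 : ∀ (ρ : Measure (β × γ)) [IsFiniteMeasure ρ] (U : Set β) (V : Set γ),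
      IsOpen U → IsOpen V →
      Tendsto (fun n => ∫ p, oA U n p.1 * V.indicator (fun _ => (1:ℝ)) p.2 ∂ρ) atTop
        (𝓝 ((ρ (U ×ˢ V)).toReal)) := by
    intro ρ _ U V hU hV
    have hlim2 : Tendsto (fun n => ∫ p, oA U n p.1 * V.indicator (fun _ => (1:ℝ)) p.2 ∂ρ) atTop
        (𝓝 (∫ p : β × γ, U.indicator (fun _ => (1:ℝ)) p.1
              * V.indicator (fun _ => (1:ℝ)) p.2 ∂ρ)) := by
      apply tendsto_integral_of_dominated_convergence (fun _ => (1 : ℝ))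
      · intro n
        exact (((oA U n).continuous.comp continuous_fst).measurable.mul
          ((measurable_const.indicator hV.measurableSet).comp
            measurable_snd)).aestronglyMeasurable
      · exact integrable_const 1
      · intro n
        filter_upwards with p
        rw [Real.norm_eq_abs, abs_mul]
        have h1 := oA_nonneg U n p.1
        have h2 := oA_le_one U n p.1
        have h3 : |V.indicator (fun _ => (1:ℝ)) p.2| ≤ 1 := by
          by_cases h : p.2 ∈ V <;> simp [h]
        calc |oA U n p.1| * |V.indicator (fun _ => (1:ℝ)) p.2| ≤ 1 * 1 := by
              apply mul_le_mul _ h3 (abs_nonneg _) zero_le_one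
              rw [abs_of_nonneg h1]; exact h2
          _ = 1 := by ring
      · filter_upwards with p
        exact (oA_tendsto hU p.1).mul tendsto_const_nhds
    have heq : (∫ p : β × γ, U.indicator (fun _ => (1:ℝ)) p.1
        * V.indicator (fun _ => (1:ℝ)) p.2 ∂ρ) = (ρ (U ×ˢ V)).toReal := by
      have : (fun p : β × γ => U.indicator (fun _ => (1:ℝ)) p.1
          * V.indicator (fun _ => (1:ℝ)) p.2)
          = (U ×ˢ V).indicator (fun _ => (1:ℝ)) := funext (indprod U V)
      rw [this, integral_indicator_const (1:ℝ)
        ((hU.measurableSet.prod hV.measurableSet))]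
      simp
      rfl
    rw [heq] at hlim2
    exact hlim2
  -- rectangles have equal measure
  have hrect : ∀ (U : Set β) (V : Set γ), IsOpen U → IsOpen V → μ (U ×ˢ V) = ν (U ×ˢ V) := by
    intro U V hU hV
    have hnm : ∀ n, Tendsto (fun m => ∫ p, oA U n p.1 * oA V m p.2 ∂μ) atTop
        (𝓝 (∫ p, oA U n p.1 * V.indicator (fun _ => (1:ℝ)) p.2 ∂μ)) := main μ U V hU hV
    have hnm' : ∀ n, Tendsto (fun m => ∫ p, oA U n p.1 * oA V m p.2 ∂ν) atTop
        (𝓝 (∫ p, oA U n p.1 * V.indicator (fun _ => (1:ℝ)) p.2 ∂ν)) := main ν U V hU hV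
    have hstep : ∀ n, (∫ p, oA U n p.1 * V.indicator (fun _ => (1:ℝ)) p.2 ∂μ)
        = ∫ p, oA U n p.1 * V.indicator (fun _ => (1:ℝ)) p.2 ∂ν := by
      intro n
      refine tendsto_nhds_unique ?_ (hnm' n)
      have he : ∀ m, (∫ p, oA U n p.1 * oA V m p.2 ∂μ)
          = ∫ p, oA U n p.1 * oA V m p.2 ∂ν := fun m => hint (oA U n) (oA V m)
      simpa only [he] using hnm n
    have h1 := main2 μ U V hU hV
    have h2 := main2 ν U V hU hV
    have : Tendsto (fun n => ∫ p, oA U n p.1 * V.indicator (fun _ => (1:ℝ)) p.2 ∂μ) atTop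
        (𝓝 ((ν (U ×ˢ V)).toReal)) := by
      simpa only [hstep] using h2
    have htr : (μ (U ×ˢ V)).toReal = (ν (U ×ˢ V)).toReal := tendsto_nhds_unique h1 this
    exact (ENNReal.toReal_eq_toReal_iff' (measure_ne_top μ _) (measure_ne_top ν _)).mp htr
  -- conclude by the pi-system argument
  refine ext_of_generate_finite _ hgen.symm hpi ?_ ?_
  · rintro s ⟨U, hU, V, hV, rfl⟩
    exact hrect U V hU hV
  · have := hrect univ univ isOpen_univ isOpen_univ
    simpa using this


end ExtProd


open MeasureTheory Filter Topology

set_option maxHeartbeats 1000000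

/-- If `P` is the weak limit of the push-forwards `P_ε` of the normalized
Lebesgue measure on a compact set `G` under `x ↦ (x, θ_{x/ε} u_ε)`, where `θ` is
a continuous `d`-parameter group of translations acting on a Polish space `X`
and `G` satisfies `|(G+εx) △ G|/|G| → 0`, then `P` is invariant under
`(x,u) ↦ (x, θ_{λ(x)} u)` for every `C¹` map `λ`. -/
theorem limit_measure_T_lambda_invariant
    (d : ℕ) (X : Type*) [MetricSpace X]
    [TopologicalSpace.SeparableSpace X] [CompleteSpace X]
    [MeasurableSpace X] [BorelSpace X]
    (θ : (Fin d → ℝ) → X → X)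
    (hθadd : ∀ (a b : Fin d → ℝ) (v : X), θ a (θ b v) = θ (a + b) v)
    (hθzero : ∀ v : X, θ 0 v = v)
    (hθcont₁ : ∀ v : X, Continuous fun a => θ a v)
    (hθcont₂ : ∀ a : Fin d → ℝ, Continuous (θ a))
    (hθmeas : Measurable fun q : (Fin d → ℝ) × X => θ q.1 q.2)
    (G : Set (Fin d → ℝ)) (hGc : IsCompact G) (hGpos : 0 < volume G)
    (hGsym : ∀ x : Fin d → ℝ,
      Tendsto (fun ε : ℝ =>
          volume (symmDiff ((fun y => y + ε • x) '' G) G))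
        (nhds 0) (nhds 0))
    (ε : ℕ → ℝ) (hεpos : ∀ n, 0 < ε n) (hε : Tendsto ε atTop (nhds 0))
    (u : ℕ → X)
    (P : Measure ((Fin d → ℝ) × X)) [IsProbabilityMeasure P]
    (hlim : ∀ f : BoundedContinuousFunction ((Fin d → ℝ) × X) ℝ,
      Tendsto (fun n => ∫ p, f p ∂(Measure.map
          (fun a : Fin d → ℝ => (a, θ ((ε n)⁻¹ • a) (u n)))
          ((volume G)⁻¹ • volume.restrict G)))
        atTop (nhds (∫ p, f p ∂P)))
    (lam : (Fin d → ℝ) → (Fin d → ℝ))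
    (hlam : ContDiffOn ℝ 1 lam G) (hlammeas : Measurable lam) :
    Measure.map (fun p : (Fin d → ℝ) × X => (p.1, θ (lam p.1) p.2)) P = P := by
  classical
  haveI : SecondCountableTopology X := UniformSpace.secondCountable_of_separable X
  have hGm : MeasurableSet G := hGc.measurableSet
  -- Step 1: constant shift invariance at the level of product test functions
  have keyA : ∀ (g : BoundedContinuousFunction (Fin d → ℝ) ℝ)
      (h : BoundedContinuousFunction X ℝ) (c : Fin d → ℝ),
      ∫ p, g p.1 * h (θ c p.2) ∂P = ∫ p, g p.1 * h p.2 ∂P := by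
    intro g h c
    have hcont₁ : Continuous fun p : (Fin d → ℝ) × X => g p.1 * h (θ c p.2) :=
      (g.continuous.comp continuous_fst).mul
        (h.continuous.comp ((hθcont₂ c).comp continuous_snd))
    have hcont₂ : Continuous fun p : (Fin d → ℝ) × X => g p.1 * h p.2 :=
      (g.continuous.comp continuous_fst).mul (h.continuous.comp continuous_snd)
    have hb₁ : ∀ p : (Fin d → ℝ) × X, ‖g p.1 * h (θ c p.2)‖ ≤ ‖g‖ * ‖h‖ := fun p => by
      rw [norm_mul]
      exact mul_le_mul (g.norm_coe_le_norm _) (h.norm_coe_le_norm _)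
        (norm_nonneg _) (norm_nonneg _)
    have hb₂ : ∀ p : (Fin d → ℝ) × X, ‖g p.1 * h p.2‖ ≤ ‖g‖ * ‖h‖ := fun p => by
      rw [norm_mul]
      exact mul_le_mul (g.norm_coe_le_norm _) (h.norm_coe_le_norm _)
        (norm_nonneg _) (norm_nonneg _)
    set F₁ : BoundedContinuousFunction ((Fin d → ℝ) × X) ℝ :=
      BoundedContinuousFunction.ofNormedAddCommGroup _ hcont₁ (‖g‖ * ‖h‖) hb₁ with hF₁def
    set F₂ : BoundedContinuousFunction ((Fin d → ℝ) × X) ℝ :=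
      BoundedContinuousFunction.ofNormedAddCommGroup _ hcont₂ (‖g‖ * ‖h‖) hb₂ with hF₂def
    have hlim₁ := hlim F₁
    have hlim₂ := hlim F₂
    -- the map defining the approximating measures is measurable
    have hmn : ∀ n, Measurable (fun a : Fin d → ℝ => (a, θ ((ε n)⁻¹ • a) (u n))) := fun n =>
      measurable_id.prodMk
        ((hθcont₁ (u n)).comp (continuous_const_smul ((ε n)⁻¹ : ℝ))).measurable
    -- abbreviations
    set v : ℕ → (Fin d → ℝ) := fun n => ε n • c with hvdef
    set φ : ℕ → (Fin d → ℝ) → ℝ := fun n y => h (θ ((ε n)⁻¹ • y) (u n)) with hφdef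
    set A : ℕ → ℝ := fun n => ∫ a in G, g a * φ n (a + v n) ∂volume with hAdef
    set B : ℕ → ℝ := fun n => ∫ a in G, g a * φ n a ∂volume with hBdef
    have hφcont : ∀ n, Continuous (φ n) := fun n =>
      h.continuous.comp ((hθcont₁ (u n)).comp (continuous_const_smul _))
    have hφb : ∀ n y, ‖φ n y‖ ≤ ‖h‖ := fun n y => h.norm_coe_le_norm _
    have hsm : ∀ (n : ℕ) (a : Fin d → ℝ), c + (ε n)⁻¹ • a = (ε n)⁻¹ • (a + v n) := by
      intro n a
      rw [hvdef, smul_add, smul_smul, inv_mul_cancel₀ (hεpos n).ne', one_smul, add_comm]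
    -- identification of the integrals against the approximating measures
    have hA : ∀ n, (∫ p, F₁ p ∂(Measure.map
        (fun a : Fin d → ℝ => (a, θ ((ε n)⁻¹ • a) (u n)))
        ((volume G)⁻¹ • volume.restrict G))) = (volume G)⁻¹.toReal • A n := by
      intro n
      rw [integral_map (hmn n).aemeasurable F₁.continuous.aestronglyMeasurable,
        integral_smul_measure]
      congr 1
      refine integral_congr_ae (Filter.Eventually.of_forall fun a => ?_)
      rw [hF₁def]
      simp only [BoundedContinuousFunction.coe_ofNormedAddCommGroup]
      rw [hθadd, hsm n a]
    have hB : ∀ n, (∫ p, F₂ p ∂(Measure.map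
        (fun a : Fin d → ℝ => (a, θ ((ε n)⁻¹ • a) (u n)))
        ((volume G)⁻¹ • volume.restrict G))) = (volume G)⁻¹.toReal • B n := by
      intro n
      rw [integral_map (hmn n).aemeasurable F₂.continuous.aestronglyMeasurable,
        integral_smul_measure]
      congr 1
    -- translation sets
    have hvlim : Tendsto v atTop (𝓝 0) := by
      have := hε.smul_const c
      simpa [hvdef] using this
    set W : ℕ → Set (Fin d → ℝ) := fun n => (fun y => y + v n) '' G with hWdef
    have hWeq : ∀ n, W n = (fun y => y - v n) ⁻¹' G := by
      intro n; ext y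
      simp only [hWdef, Set.mem_image, Set.mem_preimage]
      constructor
      · rintro ⟨a, ha, rfl⟩; simpa [add_sub_cancel_right] using ha
      · intro hy; exact ⟨y - v n, hy, by simp [sub_add_cancel]⟩
    have hWc : ∀ n, IsCompact (W n) := fun n =>
      hGc.image (continuous_id.add continuous_const)
    have hWm : ∀ n, MeasurableSet (W n) := fun n => (hWc n).measurableSet
    -- the two integrands after translation
    set f₁ : ℕ → (Fin d → ℝ) → ℝ :=
      fun n => (W n).indicator (fun z => g (z - v n) * φ n z) with hf₁def
    set f₂ : ℕ → (Fin d → ℝ) → ℝ :=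
      fun n => G.indicator (fun z => g z * φ n z) with hf₂def
    have hInt₁ : ∀ n, Integrable (f₁ n) volume := fun n =>
      (((g.continuous.comp (continuous_id.sub continuous_const)).mul
        (hφcont n)).continuousOn.integrableOn_compact (hWc n)).integrable_indicator (hWm n)
    have hInt₂ : ∀ n, Integrable (f₂ n) volume := fun n =>
      ((g.continuous.mul (hφcont n)).continuousOn.integrableOn_compact
        hGc).integrable_indicator hGm
    -- A n as an integral of f₁ n via translation invariance
    have htransA : ∀ n, A n = ∫ y, f₁ n y ∂volume := by
      intro n
      have h2 : ∀ y : Fin d → ℝ,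
          G.indicator (fun a => g a * φ n (a + v n)) y = f₁ n (y + v n) := by
        intro y
        by_cases hy : y ∈ G
        · have hyW : y + v n ∈ W n := ⟨y, hy, rfl⟩
          rw [hf₁def]
          simp [Set.indicator_of_mem, hy, hyW, add_sub_cancel_right]
        · have hyW : y + v n ∉ W n := by
            intro hcon
            rw [hWeq] at hcon
            simp only [Set.mem_preimage, add_sub_cancel_right] at hcon
            exact hy hcon
          rw [hf₁def]
          simp [Set.indicator_of_notMem, hy, hyW]
      calc A n = ∫ y, G.indicator (fun a => g a * φ n (a + v n)) y ∂volume :=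
            (integral_indicator hGm).symm
        _ = ∫ y, f₁ n (y + v n) ∂volume := by
            refine integral_congr_ae (Filter.Eventually.of_forall fun y => h2 y)
        _ = ∫ y, f₁ n y ∂volume := integral_add_right_eq_self (f₁ n) (v n)
    have htransB : ∀ n, B n = ∫ y, f₂ n y ∂volume := fun n =>
      (integral_indicator hGm).symm
    -- pointwise bound
    set bnd : ℕ → (Fin d → ℝ) → ℝ := fun n y =>
      ‖g‖ * ‖h‖ * (symmDiff (W n) G).indicator (fun _ => (1:ℝ)) y
        + ‖h‖ * G.indicator (fun z => |g (z - v n) - g z|) y with hbnddef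
    have hpt : ∀ n y, ‖f₁ n y - f₂ n y‖ ≤ bnd n y := by
      intro n y
      simp only [hbnddef, hf₁def, hf₂def]
      by_cases hyW : y ∈ W n <;> by_cases hyG : y ∈ G
      · have hsd : y ∉ symmDiff (W n) G := by
          rw [Set.mem_symmDiff]; simp [hyW, hyG]
        rw [Set.indicator_of_mem hyW, Set.indicator_of_mem hyG,
          Set.indicator_of_notMem hsd, Set.indicator_of_mem hyG, mul_zero, zero_add]
        have hfac : g (y - v n) * φ n y - g y * φ n y = (g (y - v n) - g y) * φ n y := by
          ring
        rw [hfac, norm_mul, Real.norm_eq_abs (g (y - v n) - g y), mul_comm]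
        exact mul_le_mul_of_nonneg_right (hφb n y) (abs_nonneg _)
      · have hsd : y ∈ symmDiff (W n) G := by
          rw [Set.mem_symmDiff]; left; exact ⟨hyW, hyG⟩
        rw [Set.indicator_of_mem hyW, Set.indicator_of_notMem hyG,
          Set.indicator_of_mem hsd, Set.indicator_of_notMem hyG,
          mul_one, mul_zero, add_zero, sub_zero, norm_mul]
        exact mul_le_mul (g.norm_coe_le_norm _) (hφb n y) (norm_nonneg _) (norm_nonneg _)
      · have hsd : y ∈ symmDiff (W n) G := by
          rw [Set.mem_symmDiff]; right; exact ⟨hyG, hyW⟩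
        rw [Set.indicator_of_notMem hyW, Set.indicator_of_mem hyG,
          Set.indicator_of_mem hsd, Set.indicator_of_mem hyG,
          mul_one, zero_sub, norm_neg, norm_mul]
        have hle : ‖g y‖ * ‖φ n y‖ ≤ ‖g‖ * ‖h‖ :=
          mul_le_mul (g.norm_coe_le_norm _) (hφb n y) (norm_nonneg _) (norm_nonneg _)
        have hnn : 0 ≤ ‖h‖ * |g (y - v n) - g y| := by positivity
        linarith
      · have hsd : y ∉ symmDiff (W n) G := by
          rw [Set.mem_symmDiff]; simp [hyW, hyG]
        rw [Set.indicator_of_notMem hyW, Set.indicator_of_notMem hyG,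
          Set.indicator_of_notMem hsd, Set.indicator_of_notMem hyG]
        simp
    -- integrability of the bound and its integral
    have hsdm : ∀ n, MeasurableSet (symmDiff (W n) G) := fun n => (hWm n).symmDiff hGm
    have hsdfin : ∀ n, volume (symmDiff (W n) G) < ⊤ := by
      intro n
      have hsub : volume (symmDiff (W n) G) ≤ volume (W n ∪ G) :=
        measure_mono Set.symmDiff_subset_union
      exact lt_of_le_of_lt hsub (lt_of_le_of_lt (measure_union_le _ _)
        (ENNReal.add_lt_top.mpr ⟨(hWc n).measure_lt_top, hGc.measure_lt_top⟩))
    have hIb1 : ∀ n, Integrable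
        (fun y => (symmDiff (W n) G).indicator (fun _ => (1:ℝ)) y) volume := fun n =>
      (integrable_indicator_iff (hsdm n)).mpr
        ((integrableOn_const_iff (C := (1:ℝ))).mpr (Or.inr (hsdfin n)))
    have hIb2 : ∀ n, Integrable
        (fun y => G.indicator (fun z => |g (z - v n) - g z|) y) volume := fun n =>
      (((g.continuous.comp (continuous_id.sub continuous_const)).sub
        g.continuous).abs.continuousOn.integrableOn_compact hGc).integrable_indicator hGm
    have hIbnd : ∀ n, Integrable (bnd n) volume := fun n =>
      (((hIb1 n).const_mul _).add ((hIb2 n).const_mul _))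
    have hbndint : ∀ n, (∫ y, bnd n y ∂volume)
        = ‖g‖ * ‖h‖ * (volume (symmDiff (W n) G)).toReal
          + ‖h‖ * ∫ y in G, |g (y - v n) - g y| ∂volume := by
      intro n
      rw [hbnddef]
      rw [integral_add ((hIb1 n).const_mul _) ((hIb2 n).const_mul _),
        integral_const_mul, integral_const_mul,
        integral_indicator_const (1:ℝ) (hsdm n), integral_indicator hGm]
      simp
      left; rfl
    -- the main estimate
    have hmain : ∀ n, |A n - B n|
        ≤ ‖g‖ * ‖h‖ * (volume (symmDiff (W n) G)).toReal
          + ‖h‖ * ∫ y in G, |g (y - v n) - g y| ∂volume := by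
      intro n
      rw [htransA n, htransB n, ← integral_sub (hInt₁ n) (hInt₂ n), ← hbndint n]
      calc |∫ y, (f₁ n y - f₂ n y) ∂volume| ≤ ∫ y, ‖f₁ n y - f₂ n y‖ ∂volume := by
            rw [← Real.norm_eq_abs]
            exact norm_integral_le_integral_norm _
        _ ≤ ∫ y, bnd n y ∂volume := by
            refine integral_mono ((hInt₁ n).sub (hInt₂ n)).norm (hIbnd n) ?_
            exact fun y => hpt n y
    -- both error terms tend to zero
    have hE1 : Tendsto (fun n => (volume (symmDiff (W n) G)).toReal) atTop (𝓝 0) := by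
      have hsd : Tendsto (fun n => volume (symmDiff ((fun y => y + ε n • c) '' G) G))
          atTop (𝓝 0) := (hGsym c).comp hε
      have := (ENNReal.tendsto_toReal (by simp : (0:ENNReal) ≠ ⊤)).comp hsd
      simpa [hWdef, hvdef, Function.comp_def] using this
    have hE2 : Tendsto (fun n => ∫ y in G, |g (y - v n) - g y| ∂volume) atTop (𝓝 0) := by
      have hDCT := tendsto_integral_of_dominated_convergence
        (μ := volume.restrict G) (F := fun n y => |g (y - v n) - g y|)
        (f := fun _ => (0:ℝ)) (bound := fun _ => 2 * ‖g‖)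
        (fun n => (((g.continuous.comp (continuous_id.sub continuous_const)).sub
          g.continuous).abs).aestronglyMeasurable)
        ((integrableOn_const_iff (C := 2 * ‖g‖)).mpr (Or.inr hGc.measure_lt_top))
        (fun n => Filter.Eventually.of_forall fun y => by
          rw [Real.norm_eq_abs, abs_abs]
          calc |g (y - v n) - g y| ≤ ‖g (y - v n)‖ + ‖g y‖ := by
                rw [Real.norm_eq_abs, Real.norm_eq_abs]; exact abs_sub _ _
            _ ≤ ‖g‖ + ‖g‖ := add_le_add (g.norm_coe_le_norm _) (g.norm_coe_le_norm _)
            _ = 2 * ‖g‖ := by ring)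
        (Filter.Eventually.of_forall fun y => by
          have hy : Tendsto (fun n => y - v n) atTop (𝓝 y) := by
            simpa using tendsto_const_nhds.sub hvlim
          have : Tendsto (fun n => g (y - v n) - g y) atTop (𝓝 (g y - g y)) :=
            ((g.continuous.tendsto y).comp hy).sub tendsto_const_nhds
          simpa [sub_self] using this.abs)
      simpa using hDCT
    have hEtot : Tendsto (fun n => ‖g‖ * ‖h‖ * (volume (symmDiff (W n) G)).toReal
        + ‖h‖ * ∫ y in G, |g (y - v n) - g y| ∂volume) atTop (𝓝 0) := by
      have := (hE1.const_mul (‖g‖ * ‖h‖)).add (hE2.const_mul ‖h‖)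
      simpa using this
    have hABlim : Tendsto (fun n => A n - B n) atTop (𝓝 0) :=
      squeeze_zero_norm (fun n => by rw [Real.norm_eq_abs]; exact hmain n) hEtot
    -- conclude
    have hL : Tendsto (fun n =>
        (∫ p, F₁ p ∂(Measure.map (fun a : Fin d → ℝ => (a, θ ((ε n)⁻¹ • a) (u n)))
          ((volume G)⁻¹ • volume.restrict G)))
        - (∫ p, F₂ p ∂(Measure.map (fun a : Fin d → ℝ => (a, θ ((ε n)⁻¹ • a) (u n)))
          ((volume G)⁻¹ • volume.restrict G)))) atTop
        (𝓝 ((∫ p, F₁ p ∂P) - ∫ p, F₂ p ∂P)) := hlim₁.sub hlim₂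
    have heq : ∀ n,
        (∫ p, F₁ p ∂(Measure.map (fun a : Fin d → ℝ => (a, θ ((ε n)⁻¹ • a) (u n)))
          ((volume G)⁻¹ • volume.restrict G)))
        - (∫ p, F₂ p ∂(Measure.map (fun a : Fin d → ℝ => (a, θ ((ε n)⁻¹ • a) (u n)))
          ((volume G)⁻¹ • volume.restrict G)))
        = (volume G)⁻¹.toReal * (A n - B n) := by
      intro n
      rw [hA n, hB n, smul_eq_mul, smul_eq_mul]
      ring
    have h0 : Tendsto (fun n => (volume G)⁻¹.toReal * (A n - B n)) atTop (𝓝 0) := by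
      simpa using hABlim.const_mul ((volume G)⁻¹.toReal)
    have hfin : (∫ p, F₁ p ∂P) - (∫ p, F₂ p ∂P) = 0 :=
      tendsto_nhds_unique (by simpa only [heq] using hL) h0
    have hfin' : (∫ p, F₁ p ∂P) = ∫ p, F₂ p ∂P := sub_eq_zero.mp hfin
    rw [hF₁def, hF₂def] at hfin'
    simpa only [BoundedContinuousFunction.coe_ofNormedAddCommGroup] using hfin'
  -- Step 2: constant shift invariance as measure equality
  have keyC : ∀ c : Fin d → ℝ,
      Measure.map (fun p : (Fin d → ℝ) × X => (p.1, θ c p.2)) P = P := by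
    intro c
    have hTc : Measurable (fun p : (Fin d → ℝ) × X => (p.1, θ c p.2)) :=
      measurable_fst.prodMk ((hθcont₂ c).measurable.comp measurable_snd)
    haveI : IsProbabilityMeasure
        (Measure.map (fun p : (Fin d → ℝ) × X => (p.1, θ c p.2)) P) :=
      Measure.isProbabilityMeasure_map hTc.aemeasurable
    refine ext_of_prod_integral _ _ ?_
    intro g h
    have hcont : Continuous fun p : (Fin d → ℝ) × X => g p.1 * h p.2 :=
      (g.continuous.comp continuous_fst).mul (h.continuous.comp continuous_snd)
    rw [integral_map hTc.aemeasurable hcont.aestronglyMeasurable]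
    exact keyA g h c
  -- Step 3: indicator-weighted version
  have keyI : ∀ (A : Set (Fin d → ℝ)), MeasurableSet A →
      ∀ (g : BoundedContinuousFunction (Fin d → ℝ) ℝ)
        (h : BoundedContinuousFunction X ℝ) (c : Fin d → ℝ),
      ∫ p, A.indicator (fun _ => (1:ℝ)) p.1 * (g p.1 * h (θ c p.2)) ∂P
        = ∫ p, A.indicator (fun _ => (1:ℝ)) p.1 * (g p.1 * h p.2) ∂P := by
    intro A hA g h c
    have hTc : Measurable (fun p : (Fin d → ℝ) × X => (p.1, θ c p.2)) :=
      measurable_fst.prodMk ((hθcont₂ c).measurable.comp measurable_snd)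
    have hFmeas : Measurable (fun p : (Fin d → ℝ) × X =>
        A.indicator (fun _ => (1:ℝ)) p.1 * (g p.1 * h p.2)) := by
      exact ((measurable_const.indicator hA).comp measurable_fst).mul
        ((g.continuous.measurable.comp measurable_fst).mul
          (h.continuous.measurable.comp measurable_snd))
    calc ∫ p, A.indicator (fun _ => (1:ℝ)) p.1 * (g p.1 * h (θ c p.2)) ∂P
        = ∫ p, A.indicator (fun _ => (1:ℝ)) p.1 * (g p.1 * h p.2)
            ∂(Measure.map (fun p : (Fin d → ℝ) × X => (p.1, θ c p.2)) P) := by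
          rw [integral_map hTc.aemeasurable hFmeas.aestronglyMeasurable]
      _ = ∫ p, A.indicator (fun _ => (1:ℝ)) p.1 * (g p.1 * h p.2) ∂P := by rw [keyC c]
  -- Step 4: simple function version
  have keyS : ∀ (ℓ : SimpleFunc (Fin d → ℝ) (Fin d → ℝ))
      (g : BoundedContinuousFunction (Fin d → ℝ) ℝ) (h : BoundedContinuousFunction X ℝ),
      ∫ p, g p.1 * h (θ (ℓ p.1) p.2) ∂P = ∫ p, g p.1 * h p.2 ∂P := by
    intro ℓ g h
    have hintg : ∀ (c : Fin d → ℝ) (k : X → ℝ), Measurable k → (∀ v, ‖k v‖ ≤ ‖h‖) →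
        Integrable (fun p : (Fin d → ℝ) × X =>
          (ℓ ⁻¹' {c}).indicator (fun _ => (1:ℝ)) p.1 * (g p.1 * k p.2)) P := by
      intro c k hk hkb
      refine Integrable.mono' (integrable_const (‖g‖ * ‖h‖)) ?_ ?_
      · exact (((measurable_const.indicator (ℓ.measurableSet_fiber c)).comp
          measurable_fst).mul ((g.continuous.measurable.comp measurable_fst).mul
            (hk.comp measurable_snd))).aestronglyMeasurable
      · filter_upwards with p
        rw [norm_mul, norm_mul]
        have h1 : ‖(ℓ ⁻¹' {c}).indicator (fun _ => (1:ℝ)) p.1‖ ≤ 1 := by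
          by_cases hm : p.1 ∈ ℓ ⁻¹' {c} <;> simp [hm]
        have h2 : ‖g p.1‖ * ‖k p.2‖ ≤ ‖g‖ * ‖h‖ :=
          mul_le_mul (g.norm_coe_le_norm p.1) (hkb p.2) (norm_nonneg _) (norm_nonneg _)
        calc ‖(ℓ ⁻¹' {c}).indicator (fun _ => (1:ℝ)) p.1‖ * (‖g p.1‖ * ‖k p.2‖)
            ≤ 1 * (‖g‖ * ‖h‖) :=
              mul_le_mul h1 h2 (by positivity) zero_le_one
          _ = ‖g‖ * ‖h‖ := one_mul _
    have expand : ∀ (w : (Fin d → ℝ) → ℝ) (x : Fin d → ℝ),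
        (∑ c ∈ ℓ.range, (ℓ ⁻¹' {c}).indicator (fun _ => (1:ℝ)) x * w c) = w (ℓ x) := by
      intro w x
      rw [Finset.sum_eq_single (ℓ x)]
      · simp [Set.indicator_apply]
      · intro c _ hne
        have hx : x ∉ ℓ ⁻¹' {c} := by
          simp only [Set.mem_preimage, Set.mem_singleton_iff]
          exact fun hh => hne hh.symm
        simp [Set.indicator_of_notMem hx]
      · intro hx; exact absurd (ℓ.mem_range_self x) hx
    have hbθ : ∀ (c : Fin d → ℝ) (v : X), ‖h (θ c v)‖ ≤ ‖h‖ := fun c v =>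
      h.norm_coe_le_norm _
    calc ∫ p, g p.1 * h (θ (ℓ p.1) p.2) ∂P
        = ∫ p, ∑ c ∈ ℓ.range,
            (ℓ ⁻¹' {c}).indicator (fun _ => (1:ℝ)) p.1 * (g p.1 * h (θ c p.2)) ∂P := by
          congr 1; funext p
          exact (expand (fun c => g p.1 * h (θ c p.2)) p.1).symm
      _ = ∑ c ∈ ℓ.range, ∫ p,
            (ℓ ⁻¹' {c}).indicator (fun _ => (1:ℝ)) p.1 * (g p.1 * h (θ c p.2)) ∂P := by
          refine integral_finset_sum _ (fun c _ => ?_)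
          exact hintg c (fun v => h (θ c v))
            (h.continuous.measurable.comp (hθcont₂ c).measurable) (fun v => hbθ c v)
      _ = ∑ c ∈ ℓ.range, ∫ p,
            (ℓ ⁻¹' {c}).indicator (fun _ => (1:ℝ)) p.1 * (g p.1 * h p.2) ∂P := by
          refine Finset.sum_congr rfl (fun c _ => ?_)
          exact keyI _ (ℓ.measurableSet_fiber c) g h c
      _ = ∫ p, ∑ c ∈ ℓ.range,
            (ℓ ⁻¹' {c}).indicator (fun _ => (1:ℝ)) p.1 * (g p.1 * h p.2) ∂P := by
          refine (integral_finset_sum _ (fun c _ => ?_)).symm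
          exact hintg c (fun v => h v) h.continuous.measurable (fun v => h.norm_coe_le_norm v)
      _ = ∫ p, g p.1 * h p.2 ∂P := by
          congr 1; funext p
          exact expand (fun _ => g p.1 * h p.2) p.1
  -- Step 5: general measurable lambda via approximation
  have keyL : ∀ (g : BoundedContinuousFunction (Fin d → ℝ) ℝ)
      (h : BoundedContinuousFunction X ℝ),
      ∫ p, g p.1 * h (θ (lam p.1) p.2) ∂P = ∫ p, g p.1 * h p.2 ∂P := by
    intro g h
    have h0 : (0 : Fin d → ℝ) ∈ (Set.univ : Set (Fin d → ℝ)) := Set.mem_univ 0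
    set ℓ : ℕ → SimpleFunc (Fin d → ℝ) (Fin d → ℝ) :=
      fun k => SimpleFunc.approxOn lam hlammeas Set.univ 0 h0 k with hℓdef
    have hconv : ∀ x, Tendsto (fun k => ℓ k x) atTop (𝓝 (lam x)) := fun x =>
      SimpleFunc.tendsto_approxOn hlammeas h0 (by simp)
    have hDCT : Tendsto (fun k => ∫ p, g p.1 * h (θ (ℓ k p.1) p.2) ∂P) atTop
        (𝓝 (∫ p, g p.1 * h (θ (lam p.1) p.2) ∂P)) := by
      apply tendsto_integral_of_dominated_convergence (fun _ => ‖g‖ * ‖h‖)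
      · intro k
        exact ((g.continuous.measurable.comp measurable_fst).mul
          (h.continuous.measurable.comp (hθmeas.comp
            (((ℓ k).measurable.comp measurable_fst).prodMk
              measurable_snd)))).aestronglyMeasurable
      · exact integrable_const _
      · intro k
        filter_upwards with p
        rw [norm_mul]
        exact mul_le_mul (g.norm_coe_le_norm _) (h.norm_coe_le_norm _)
          (norm_nonneg _) (norm_nonneg _)
      · filter_upwards with p
        exact tendsto_const_nhds.mul ((h.continuous.tendsto _).comp
          (((hθcont₁ p.2).tendsto _).comp (hconv p.1)))
    have hconst : ∀ k, (∫ p, g p.1 * h (θ (ℓ k p.1) p.2) ∂P) = ∫ p, g p.1 * h p.2 ∂P :=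
      fun k => keyS (ℓ k) g h
    have : Tendsto (fun _ : ℕ => ∫ p, g p.1 * h p.2 ∂P) atTop
        (𝓝 (∫ p, g p.1 * h (θ (lam p.1) p.2) ∂P)) := by
      simpa only [hconst] using hDCT
    exact (tendsto_nhds_unique this tendsto_const_nhds)
  -- Step 6: conclude
  have hTmeas : Measurable (fun p : (Fin d → ℝ) × X => (p.1, θ (lam p.1) p.2)) :=
    measurable_fst.prodMk
      (hθmeas.comp ((hlammeas.comp measurable_fst).prodMk measurable_snd))
  haveI : IsProbabilityMeasure
      (Measure.map (fun p : (Fin d → ℝ) × X => (p.1, θ (lam p.1) p.2)) P) :=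
    Measure.isProbabilityMeasure_map hTmeas.aemeasurable
  refine ext_of_prod_integral _ _ ?_
  intro g h
  have hcont : Continuous fun p : (Fin d → ℝ) × X => g p.1 * h p.2 :=
    (g.continuous.comp continuous_fst).mul (h.continuous.comp continuous_snd)
  rw [integral_map hTmeas.aemeasurable hcont.aestronglyMeasurable]
  exact keyL g h
end
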